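/- For the n-gonal bipyramid BP_n with n odd, there is exactly one zigzag up to reversal; that is, BP_n is z-knotted, and the unique zigzag has length 6n (it traverses every edge exactly twice). -/

import Mathlib

open Finset
open scoped Classical

/-- A combinatorial triangulation: a finite collection of (triangular) faces,
each given as a finite set of vertices. -/
structure Triangulation (V : Type) where
  faces : Finset (Finset V)

namespace Triangulation

variable {V : Type} [DecidableEq V] (T : Triangulation V)

/-- The edges: the 2-element subsets of faces. -/
def edges : Finset (Finset V) := T.faces.biUnion fun f => f.powersetCard 2

/-- The vertices actually used by the triangulation. -/
def verts : Finset V := T.faces.sup id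

/-- The combinatorial axioms of a triangulation of a closed surface:
faces are triangles, every edge lies in exactly two faces, and two distinct
faces meet in at most an edge. -/
def IsProper : Prop :=
  (∀ f ∈ T.faces, f.card = 3) ∧
  (∀ e ∈ T.edges, (T.faces.filter fun f => e ⊆ f).card = 2) ∧
  (∀ f ∈ T.faces, ∀ g ∈ T.faces, f ≠ g → (f ∩ g).card ≤ 2)

/-- The underlying (simple) graph of the triangulation. -/
def graph : SimpleGraph V where
  Adj x y := x ≠ y ∧ ({x, y} : Finset V) ∈ T.edges
  symm := ⟨fun x y h => ⟨h.1.symm, by rw [Finset.pair_comm y x]; exact h.2⟩⟩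
  loopless := ⟨fun x h => h.1 rfl⟩

/-- A zigzag: a bi-infinite periodic sequence of edges `e i` together with the
face `f i` containing the consecutive edges `e i` and `e (i+1)`, such that
consecutive faces are distinct and edges two apart are disjoint.
`head i` is the (unique) common vertex of `e i` and `e (i+1)`; thus the `i`-th
traversal goes from `head (i-1)` to `head i`. -/
structure Zigzag where
  e : ℤ → Finset V
  f : ℤ → Finset V
  head : ℤ → V
  e_mem : ∀ i, e i ∈ T.edges
  f_mem : ∀ i, f i ∈ T.faces
  sub_left : ∀ i, e i ⊆ f i
  sub_right : ∀ i, e (i + 1) ⊆ f i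
  edges_ne : ∀ i, e i ≠ e (i + 1)
  faces_ne : ∀ i, f i ≠ f (i + 1)
  disj : ∀ i, Disjoint (e i) (e (i + 2))
  inter_eq : ∀ i, e i ∩ e (i + 1) = {head i}
  exists_period : ∃ n : ℕ, 0 < n ∧ ∀ i, e (i + n) = e i ∧ f (i + n) = f i ∧ head (i + n) = head i

namespace Zigzag

variable {T}

/-- The length of a zigzag: the minimal period of its edge sequence. -/
noncomputable def length (Z : Zigzag T) : ℕ :=
  sInf {n : ℕ | 0 < n ∧ ∀ i, Z.e (i + n) = Z.e i}

/-- How many times the edge `a` occurs in one (minimal) period of `Z`. -/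
noncomputable def mult (Z : Zigzag T) (a : Finset V) : ℕ :=
  ((Finset.range Z.length).filter fun i => Z.e (i : ℤ) = a).card

/-- The direction (tail, head) of the `i`-th traversal of `Z`. -/
def dir (Z : Zigzag T) (i : ℤ) : V × V := (Z.head (i - 1), Z.head i)

/-- Two zigzags are the same cyclic sequence up to rotation or rotation
combined with reversal. -/
def Equiv (Z W : Zigzag T) : Prop :=
  (∃ k : ℤ, ∀ i, W.e i = Z.e (i + k)) ∨ (∃ k : ℤ, ∀ i, W.e i = Z.e (k - i))

end Zigzag

/-- A triangulation is z-knotted if it has a single zigzag up to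
rotation and reversal. -/
def IsZKnotted : Prop := Nonempty (Zigzag T) ∧ ∀ Z W : Zigzag T, Z.Equiv W

/-- A z-orientation: a collection of pairwise non-equivalent zigzags which
double covers the edge set. -/
structure ZOrientation where
  zigzags : List (Zigzag T)
  cover : ∀ a ∈ T.edges, (zigzags.map fun Z => Z.mult a).sum = 2
  nonequiv : zigzags.Pairwise fun Z W => ¬ Z.Equiv W

namespace ZOrientation

variable {T}

/-- All traversals of the edge `a` by the distinguished zigzags go in the
direction `d`. -/
def dirOf (τ : ZOrientation T) (a : Finset V) (d : V × V) : Prop :=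
  ∀ Z ∈ τ.zigzags, ∀ i : ℤ, Z.e i = a → Z.dir i = d

/-- An edge of type II: both traversals go in the same direction. -/
def TypeII (τ : ZOrientation T) (a : Finset V) : Prop := ∃ d, τ.dirOf a d

/-- An edge of type I: the two traversals go in different directions. -/
def TypeI (τ : ZOrientation T) (a : Finset V) : Prop := ¬ τ.TypeII a

/-- A vertex of type I: it belongs only to edges of type I. -/
def VertexTypeI (τ : ZOrientation T) (x : V) : Prop :=
  ∀ a ∈ T.edges, x ∈ a → τ.TypeI a

/-- A vertex of type II: it belongs to some edge of type II. -/
def VertexTypeII (τ : ZOrientation T) (x : V) : Prop :=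
  ∃ a ∈ T.edges, x ∈ a ∧ τ.TypeII a

/-- A face of type I: exactly one of its edges is of type II
(the other two being of type I). -/
def FaceTypeI (τ : ZOrientation T) (f : Finset V) : Prop :=
  ∃! a : Finset V, a ∈ f.powersetCard 2 ∧ τ.TypeII a

/-- A face of type II: all its edges are of type II and their directions
form a directed cycle. -/
def FaceTypeII (τ : ZOrientation T) (f : Finset V) : Prop :=
  ∃ x y z : V, f = {x, y, z} ∧ x ≠ y ∧ y ≠ z ∧ x ≠ z ∧
    τ.dirOf {x, y} (x, y) ∧ τ.dirOf {y, z} (y, z) ∧ τ.dirOf {z, x} (z, x)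

/-- A homogeneous zigzag: it contains precisely two edges of type I after each
edge of type II, i.e. it is a cyclic sequence of blocks (II, I, I). -/
def Homogeneous (τ : ZOrientation T) (Z : Zigzag T) : Prop :=
  ∃ k : ℤ, ∀ i : ℤ, τ.TypeII (Z.e (k + 3 * i)) ∧
    τ.TypeI (Z.e (k + 3 * i + 1)) ∧ τ.TypeI (Z.e (k + 3 * i + 2))

/-- The in-degree of a vertex in the digraph of type II edges. -/
noncomputable def inDeg (τ : ZOrientation T) (x : V) : ℕ :=
  (T.edges.filter fun a => τ.TypeII a ∧ ∃ u, a = {u, x} ∧ τ.dirOf a (u, x)).card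

/-- The out-degree of a vertex in the digraph of type II edges. -/
noncomputable def outDeg (τ : ZOrientation T) (x : V) : ℕ :=
  (T.edges.filter fun a => τ.TypeII a ∧ ∃ u, a = {x, u} ∧ τ.dirOf a (x, u)).card

/-- A special pair: two type II edges with a common vertex which are
interleaved in the zigzag `Z` as a, b, a, b within one period. -/
def SpecialPair (τ : ZOrientation T) (Z : Zigzag T) (a b : Finset V) : Prop :=
  a ≠ b ∧ (a ∩ b).Nonempty ∧ τ.TypeII a ∧ τ.TypeII b ∧
  ∃ i₁ i₂ i₃ i₄ : ℤ, i₁ < i₂ ∧ i₂ < i₃ ∧ i₃ < i₄ ∧ i₄ < i₁ + (Z.length : ℤ) ∧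
    Z.e i₁ = a ∧ Z.e i₂ = b ∧ Z.e i₃ = a ∧ Z.e i₄ = b

/-- Two special pairs `c₁,c₂` and `t₁,t₂` are concordant: the zigzag
interleaves them in the cyclic pattern c₁,t₁,c₂,t₂,c₁,t₁,c₂,t₂. -/
def Concordant (τ : ZOrientation T) (Z : Zigzag T) (c₁ c₂ t₁ t₂ : Finset V) : Prop :=
  τ.SpecialPair Z c₁ c₂ ∧ τ.SpecialPair Z t₁ t₂ ∧
  (c₁ ≠ t₁ ∧ c₁ ≠ t₂ ∧ c₂ ≠ t₁ ∧ c₂ ≠ t₂) ∧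
  ∃ i₁ i₂ i₃ i₄ i₅ i₆ i₇ i₈ : ℤ,
    i₁ < i₂ ∧ i₂ < i₃ ∧ i₃ < i₄ ∧ i₄ < i₅ ∧ i₅ < i₆ ∧ i₆ < i₇ ∧ i₇ < i₈ ∧
    i₈ < i₁ + (Z.length : ℤ) ∧
    Z.e i₁ = c₁ ∧ Z.e i₂ = t₁ ∧ Z.e i₃ = c₂ ∧ Z.e i₄ = t₂ ∧
    Z.e i₅ = c₁ ∧ Z.e i₆ = t₁ ∧ Z.e i₇ = c₂ ∧ Z.e i₈ = t₂

end ZOrientation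

end Triangulation

/-- The `n`-gonal bipyramid: two apexes (the `Bool` vertices) joined to every
vertex of an `n`-cycle. -/
def BP (n : ℕ) [NeZero n] : Triangulation (Bool ⊕ ZMod n) where
  faces := Finset.univ.image fun p : Bool × ZMod n =>
    ({Sum.inl p.1, Sum.inr p.2, Sum.inr (p.2 + 1)} : Finset (Bool ⊕ ZMod n))



open Finset
open scoped Classical

section BPPre
variable {α : Type} [DecidableEq α]

lemma sub2_of_triple (x y z : α) (e : Finset α) (h : e ⊆ {x,y,z}) (hc : e.card = 2) :
    e = {x,y} ∨ e = {x,z} ∨ e = {y,z} := by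
  rcases Finset.card_eq_two.mp hc with ⟨u, v, huv, rfl⟩
  have hu : u ∈ ({x,y,z} : Finset α) := h (by simp)
  have hv : v ∈ ({x,y,z} : Finset α) := h (by simp)
  simp only [Finset.mem_insert, Finset.mem_singleton] at hu hv
  rcases hu with rfl|rfl|rfl <;> rcases hv with rfl|rfl|rfl <;>
    first
      | exact absurd rfl huv
      | simp [Finset.pair_comm]

lemma pair_eq_pair_iff' {a b c d : α} :
    ({a,b} : Finset α) = {c,d} ↔ a = c ∧ b = d ∨ a = d ∧ b = c := by
  constructor
  · intro h
    have := Finset.coe_inj.mpr h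
    simp only [Finset.coe_insert, Finset.coe_singleton] at this
    rwa [Set.pair_eq_pair_iff] at this
  · rintro (⟨rfl, rfl⟩|⟨rfl, rfl⟩)
    · rfl
    · exact Finset.pair_comm _ _

end BPPre

section ZModFacts
variable {n : ℕ} [NeZero n]

lemma zm_one_ne (hn : 3 ≤ n) : (1 : ZMod n) ≠ 0 := by
  haveI : Fact (1 < n) := ⟨by omega⟩; exact one_ne_zero

lemma zm_two_ne (hn : 3 ≤ n) : (2 : ZMod n) ≠ 0 := by
  intro h
  have h2 : ((2:ℕ) : ZMod n) = 0 := by push_cast; exact h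
  rw [ZMod.natCast_eq_zero_iff] at h2
  have := Nat.le_of_dvd (by norm_num) h2
  omega

lemma zm_int_eq_iff {a b : ℤ} : ((a : ZMod n)) = b ↔ (n:ℤ) ∣ b - a := by
  rw [ZMod.intCast_eq_intCast_iff]; exact ⟨fun h => h.dvd, fun h => Int.modEq_iff_dvd.mpr h⟩

lemma zm_coprime (hodd : Odd n) : IsCoprime (n : ℤ) 2 := by
  rw [Int.isCoprime_iff_gcd_eq_one]; simpa [Int.gcd] using Nat.coprime_two_right.mpr hodd

lemma dvd_two_mul_of (hodd : Odd n) {m : ℤ} (h2 : (2:ℤ) ∣ m) (hn : (n:ℤ) ∣ m) : (2*(n:ℤ)) ∣ m := by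
  exact (zm_coprime (n := n) hodd).symm.mul_dvd h2 hn
end ZModFacts

section BPStruct
variable {n : ℕ} [NeZero n]

def fc (n : ℕ) [NeZero n] (s : Bool) (i : ZMod n) : Finset (Bool ⊕ ZMod n) :=
  {Sum.inl s, Sum.inr i, Sum.inr (i+1)}
def eA (n : ℕ) [NeZero n] (s : Bool) (i : ZMod n) : Finset (Bool ⊕ ZMod n) :=
  {Sum.inl s, Sum.inr i}
def eC (n : ℕ) [NeZero n] (i : ZMod n) : Finset (Bool ⊕ ZMod n) :=
  {Sum.inr i, Sum.inr (i+1)}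

lemma mem_faces_iff {f : Finset (Bool ⊕ ZMod n)} :
    f ∈ (BP n).faces ↔ ∃ s i, f = fc n s i := by
  simp [BP, fc, Finset.mem_image, Prod.exists, eq_comm]

lemma fc_mem (s : Bool) (i : ZMod n) : fc n s i ∈ (BP n).faces :=
  mem_faces_iff.mpr ⟨s, i, rfl⟩

lemma fc_card (hn : 3 ≤ n) (s : Bool) (i : ZMod n) : (fc n s i).card = 3 := by
  have h1 : i ≠ i + 1 := by
    intro h; exact zm_one_ne hn (by linear_combination -h)
  rw [fc, Finset.card_insert_of_notMem (by simp), Finset.card_insert_of_notMem (by simp [h1])]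
  simp

lemma eA_card (s : Bool) (i : ZMod n) : (eA n s i).card = 2 := by
  rw [eA, Finset.card_insert_of_notMem (by simp)]; simp

lemma eC_card (hn : 3 ≤ n) (i : ZMod n) : (eC n i).card = 2 := by
  have h1 : i ≠ i + 1 := by
    intro h; exact zm_one_ne hn (by linear_combination -h)
  rw [eC, Finset.card_insert_of_notMem (by simp [h1])]; simp

lemma eA_mem (s : Bool) (i : ZMod n) : eA n s i ∈ (BP n).edges := by
  refine Finset.mem_biUnion.mpr ⟨fc n s i, fc_mem s i, Finset.mem_powersetCard.mpr ⟨?_, eA_card s i⟩⟩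
  simp [eA, fc, Finset.insert_subset_iff]

lemma eC_mem (hn : 3 ≤ n) (i : ZMod n) : eC n i ∈ (BP n).edges := by
  refine Finset.mem_biUnion.mpr ⟨fc n true i, fc_mem true i,
    Finset.mem_powersetCard.mpr ⟨?_, eC_card hn i⟩⟩
  simp [eC, fc, Finset.insert_subset_iff]

lemma edge_card {e : Finset (Bool ⊕ ZMod n)} (he : e ∈ (BP n).edges) : e.card = 2 := by
  rcases Finset.mem_biUnion.mp he with ⟨f, _, hf⟩
  exact (Finset.mem_powersetCard.mp hf).2

lemma edge_cases {e : Finset (Bool ⊕ ZMod n)} (he : e ∈ (BP n).edges) :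
    (∃ s i, e = eA n s i) ∨ (∃ i, e = eC n i) := by
  rcases Finset.mem_biUnion.mp he with ⟨f, hf, hef⟩
  rcases Finset.mem_powersetCard.mp hef with ⟨hsub, hcard⟩
  rcases mem_faces_iff.mp hf with ⟨s, i, rfl⟩
  rcases sub2_of_triple _ _ _ e hsub hcard with h|h|h
  · exact Or.inl ⟨s, i, h⟩
  · exact Or.inl ⟨s, i+1, h⟩
  · exact Or.inr ⟨i, h⟩

lemma faces_of_eA (hn : 3 ≤ n) {s : Bool} {i : ZMod n} {f : Finset (Bool ⊕ ZMod n)}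
    (hf : f ∈ (BP n).faces) (hsub : eA n s i ⊆ f) : f = fc n s i ∨ f = fc n s (i-1) := by
  rcases mem_faces_iff.mp hf with ⟨s', k, rfl⟩
  simp only [eA, fc, Finset.insert_subset_iff, Finset.singleton_subset_iff,
    Finset.mem_insert, Finset.mem_singleton, Sum.inl.injEq, Sum.inr.injEq] at hsub
  rcases hsub with ⟨h1, h2⟩
  simp at h1 h2
  rcases h1 with rfl
  rcases h2 with rfl|rfl
  · exact Or.inl rfl
  · right; rw [fc, fc]; congr 2 <;> ring_nf

lemma faces_of_eC (hn : 3 ≤ n) {i : ZMod n} {f : Finset (Bool ⊕ ZMod n)}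
    (hf : f ∈ (BP n).faces) (hsub : eC n i ⊆ f) : f = fc n true i ∨ f = fc n false i := by
  rcases mem_faces_iff.mp hf with ⟨s', k, rfl⟩
  simp only [eC, fc, Finset.insert_subset_iff, Finset.singleton_subset_iff,
    Finset.mem_insert, Finset.mem_singleton, Sum.inr.injEq] at hsub
  rcases hsub with ⟨h1, h2⟩
  simp at h1 h2
  have hk : i = k := by
    rcases h1 with rfl|rfl
    · rfl
    · exfalso
      rcases h2 with h|h
      · exact zm_two_ne hn (by linear_combination h)
      · exact zm_one_ne hn (by linear_combination h)
  subst hk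
  cases s'
  · exact Or.inr rfl
  · exact Or.inl rfl

lemma two_faces (hn : 3 ≤ n) {e F₁ F₂ F₃ : Finset (Bool ⊕ ZMod n)} (he : e ∈ (BP n).edges)
    (h1 : F₁ ∈ (BP n).faces) (h2 : F₂ ∈ (BP n).faces) (h3 : F₃ ∈ (BP n).faces)
    (s1 : e ⊆ F₁) (s2 : e ⊆ F₂) (s3 : e ⊆ F₃) (ne2 : F₂ ≠ F₁) (ne3 : F₃ ≠ F₁) : F₂ = F₃ := by
  rcases edge_cases he with ⟨s, i, rfl⟩ | ⟨i, rfl⟩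
  · rcases faces_of_eA hn h1 s1 with rfl|rfl <;>
    rcases faces_of_eA hn h2 s2 with h|h <;>
    rcases faces_of_eA hn h3 s3 with h'|h' <;> simp_all
  · rcases faces_of_eC hn h1 s1 with rfl|rfl <;>
    rcases faces_of_eC hn h2 s2 with h|h <;>
    rcases faces_of_eC hn h3 s3 with h'|h' <;> simp_all

end BPStruct

section Canon
variable {n : ℕ} [NeZero n]

def apx (m : ℤ) : Bool := decide (m % 2 = 1)
def wv (n : ℕ) [NeZero n] (m : ℤ) : ZMod n := 2 * (m : ZMod n)

lemma apx_succ (m : ℤ) : apx (m+1) = !apx m := by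
  by_cases h : m % 2 = 1
  · have h2 : (m+1) % 2 = 0 := by omega
    simp [apx, h, h2]
  · have h2 : (m+1) % 2 = 1 := by omega
    simp [apx, h, h2]

lemma apx_pred (m : ℤ) : apx (m-1) = !apx m := by
  have := apx_succ (m-1)
  rw [sub_add_cancel] at this
  rw [this, Bool.not_not]

lemma apx_ne_not (m : ℤ) : apx m ≠ !apx m := by cases apx m <;> simp

lemma apx_eq_iff (m m' : ℤ) : apx m = apx m' ↔ m % 2 = m' % 2 := by
  unfold apx
  rcases Int.emod_two_eq m with h|h <;> rcases Int.emod_two_eq m' with h'|h' <;> simp [h, h']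

lemma apx_shift {m : ℤ} (t : ℤ) : apx (m + 2*t) = apx m := by
  rw [apx_eq_iff]; omega

lemma zmn_zero : (((n:ℤ)) : ZMod n) = 0 := by
  push_cast; exact ZMod.natCast_self n

lemma wv_succ (m : ℤ) : wv n (m+1) = wv n m + 2 := by
  unfold wv; push_cast; ring

lemma wv_shift (m : ℤ) : wv n (m + 2*(n:ℤ)) = wv n m := by
  unfold wv; push_cast [ZMod.natCast_self]; ring

lemma wv_inj (hodd : Odd n) {m m' : ℤ} (h : wv n m = wv n m') : (n:ℤ) ∣ m' - m := by
  unfold wv at h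
  have h2 : ((2*m : ℤ) : ZMod n) = ((2*m' : ℤ) : ZMod n) := by push_cast; linear_combination h
  rw [zm_int_eq_iff] at h2
  have h3 : (2*m' : ℤ) - 2*m = 2*(m' - m) := by ring
  rw [h3] at h2
  exact (zm_coprime (n := n) hodd).dvd_of_dvd_mul_left h2

-- the canonical zigzag data
def E0 (n : ℕ) [NeZero n] (m : ℤ) : Finset (Bool ⊕ ZMod n) := eC n (wv n m)
def E1 (n : ℕ) [NeZero n] (m : ℤ) : Finset (Bool ⊕ ZMod n) := eA n (apx m) (wv n m + 1)
def E2 (n : ℕ) [NeZero n] (m : ℤ) : Finset (Bool ⊕ ZMod n) := eA n (apx m) (wv n m + 2)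

noncomputable def EE (n : ℕ) [NeZero n] (j : ℤ) : Finset (Bool ⊕ ZMod n) :=
  if j % 3 = 0 then E0 n (j/3) else if j % 3 = 1 then E1 n ((j-1)/3) else E2 n ((j-2)/3)

def FF (n : ℕ) [NeZero n] (j : ℤ) : Finset (Bool ⊕ ZMod n) :=
  if j % 3 = 0 then fc n (apx (j/3)) (wv n (j/3))
  else if j % 3 = 1 then fc n (apx ((j-1)/3)) (wv n ((j-1)/3) + 1)
  else fc n (apx ((j-2)/3)) (wv n ((j-2)/3) + 2)

def HH (n : ℕ) [NeZero n] (j : ℤ) : Bool ⊕ ZMod n :=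
  if j % 3 = 0 then Sum.inr (wv n (j/3) + 1)
  else if j % 3 = 1 then Sum.inl (apx ((j-1)/3))
  else Sum.inr (wv n ((j-2)/3) + 2)

lemma EE0 (m : ℤ) : EE n (3*m) = E0 n m := by
  have h1 : (3*m) % 3 = 0 := by omega
  have h2 : (3*m)/3 = m := by omega
  simp [EE, h1, h2]

lemma EE1 (m : ℤ) : EE n (3*m+1) = E1 n m := by
  have h1 : (3*m+1) % 3 = 1 := by omega
  have h0 : ¬ ((3*m+1) % 3 = 0) := by omega
  have h2 : (3*m+1-1)/3 = m := by omega
  simp [EE, h0, h1, h2]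

lemma EE2 (m : ℤ) : EE n (3*m+2) = E2 n m := by
  have h1 : ¬ ((3*m+2) % 3 = 1) := by omega
  have h0 : ¬ ((3*m+2) % 3 = 0) := by omega
  have h2 : (3*m+2-2)/3 = m := by omega
  simp [EE, h0, h1, h2]

lemma FF0 (m : ℤ) : FF n (3*m) = fc n (apx m) (wv n m) := by
  have h1 : (3*m) % 3 = 0 := by omega
  have h2 : (3*m)/3 = m := by omega
  simp [FF, h1, h2]

lemma FF1 (m : ℤ) : FF n (3*m+1) = fc n (apx m) (wv n m + 1) := by
  have h1 : (3*m+1) % 3 = 1 := by omega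
  have h0 : ¬ ((3*m+1) % 3 = 0) := by omega
  have h2 : (3*m+1-1)/3 = m := by omega
  simp [FF, h0, h1, h2]

lemma FF2 (m : ℤ) : FF n (3*m+2) = fc n (apx m) (wv n m + 2) := by
  have h1 : ¬ ((3*m+2) % 3 = 1) := by omega
  have h0 : ¬ ((3*m+2) % 3 = 0) := by omega
  have h2 : (3*m+2-2)/3 = m := by omega
  simp [FF, h0, h1, h2]

lemma HH0 (m : ℤ) : HH n (3*m) = Sum.inr (wv n m + 1) := by
  have h1 : (3*m) % 3 = 0 := by omega
  have h2 : (3*m)/3 = m := by omega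
  simp [HH, h1, h2]

lemma HH1 (m : ℤ) : HH n (3*m+1) = Sum.inl (apx m) := by
  have h1 : (3*m+1) % 3 = 1 := by omega
  have h0 : ¬ ((3*m+1) % 3 = 0) := by omega
  have h2 : (3*m+1-1)/3 = m := by omega
  simp [HH, h0, h1, h2]

lemma HH2 (m : ℤ) : HH n (3*m+2) = Sum.inr (wv n m + 2) := by
  have h1 : ¬ ((3*m+2) % 3 = 1) := by omega
  have h0 : ¬ ((3*m+2) % 3 = 0) := by omega
  have h2 : (3*m+2-2)/3 = m := by omega
  simp [HH, h0, h1, h2]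

lemma three_cases (j : ℤ) : ∃ m, j = 3*m ∨ j = 3*m+1 ∨ j = 3*m+2 := ⟨j/3, by omega⟩

end Canon

section Helpers
variable {n : ℕ} [NeZero n]

lemma zm_ne_add_one (hn : 3 ≤ n) (i : ZMod n) : i ≠ i + 1 := by
  intro h; exact zm_one_ne hn (by linear_combination -h)

lemma zm_ne_add_two (hn : 3 ≤ n) (i : ZMod n) : i ≠ i + 2 := by
  intro h; exact zm_two_ne hn (by linear_combination -h)

lemma eA_ne_eC (s : Bool) (i j : ZMod n) : eA n s i ≠ eC n j := by
  intro h
  have h2 : Sum.inl s ∈ eC n j := h ▸ (by simp [eA] : (Sum.inl s : Bool ⊕ ZMod n) ∈ eA n s i)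
  simp [eC] at h2

lemma eA_eq_iff {s s' : Bool} {i i' : ZMod n} : eA n s i = eA n s' i' ↔ s = s' ∧ i = i' := by
  unfold eA; rw [pair_eq_pair_iff']; simp

lemma eC_eq_iff (hn : 3 ≤ n) {i j : ZMod n} : eC n i = eC n j ↔ i = j := by
  unfold eC; rw [pair_eq_pair_iff']
  constructor
  · rintro (⟨h1, h2⟩|⟨h1, h2⟩)
    · simpa using h1
    · exfalso
      simp only [Sum.inr.injEq] at h1 h2
      exact zm_two_ne hn (by linear_combination h2 - h1)
  · rintro rfl; simp

lemma fc_inj (hn : 3 ≤ n) {s s' : Bool} {i j : ZMod n} (h : fc n s i = fc n s' j) :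
    s = s' ∧ i = j := by
  have hs : Sum.inl s ∈ fc n s' j := h ▸ (by simp [fc])
  have h1 : Sum.inr i ∈ fc n s' j := h ▸ (by simp [fc])
  have h2 : Sum.inr (i+1) ∈ fc n s' j := h ▸ (by simp [fc])
  simp only [fc, Finset.mem_insert, Finset.mem_singleton, Sum.inl.injEq, Sum.inr.injEq,
    reduceCtorEq, false_or, or_false] at hs h1 h2
  refine ⟨hs, ?_⟩
  rcases h1 with rfl|rfl
  · rfl
  · exfalso
    rcases h2 with h2|h2
    · exact zm_two_ne hn (by linear_combination h2)
    · exact zm_one_ne hn (by linear_combination h2)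

lemma inter_CA (s : Bool) (i : ZMod n) : eC n i ∩ eA n s (i+1) = {Sum.inr (i+1)} := by
  ext x
  simp only [Finset.mem_inter, eC, eA, Finset.mem_insert, Finset.mem_singleton]
  constructor
  · rintro ⟨h1|h1, h2|h2⟩ <;> simp_all
  · rintro rfl; simp

lemma inter_AA (s : Bool) {i j : ZMod n} (hij : i ≠ j) :
    eA n s i ∩ eA n s j = {Sum.inl s} := by
  ext x
  simp only [Finset.mem_inter, eA, Finset.mem_insert, Finset.mem_singleton]
  constructor
  · rintro ⟨h1|h1, h2|h2⟩ <;> simp_all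
  · rintro rfl; simp

lemma inter_AC (s : Bool) (i : ZMod n) : eA n s i ∩ eC n i = {Sum.inr i} := by
  ext x
  simp only [Finset.mem_inter, eC, eA, Finset.mem_insert, Finset.mem_singleton]
  constructor
  · rintro ⟨h1|h1, h2|h2⟩ <;> simp_all
  · rintro rfl; simp

lemma EE_shift (j : ℤ) : EE n (j + 6*(n:ℤ)) = EE n j := by
  obtain ⟨m, h|h|h⟩ := three_cases j <;> subst h
  · rw [show (3*m + 6*(n:ℤ) : ℤ) = 3*(m + 2*n) by ring, EE0, EE0]
    unfold E0; rw [wv_shift]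
  · rw [show (3*m + 1 + 6*(n:ℤ) : ℤ) = 3*(m + 2*n) + 1 by ring, EE1, EE1]
    unfold E1; rw [wv_shift, apx_shift]
  · rw [show (3*m + 2 + 6*(n:ℤ) : ℤ) = 3*(m + 2*n) + 2 by ring, EE2, EE2]
    unfold E2; rw [wv_shift, apx_shift]

lemma FF_shift (j : ℤ) : FF n (j + 6*(n:ℤ)) = FF n j := by
  obtain ⟨m, h|h|h⟩ := three_cases j <;> subst h
  · rw [show (3*m + 6*(n:ℤ) : ℤ) = 3*(m + 2*n) by ring, FF0, FF0, wv_shift, apx_shift]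
  · rw [show (3*m + 1 + 6*(n:ℤ) : ℤ) = 3*(m + 2*n) + 1 by ring, FF1, FF1, wv_shift, apx_shift]
  · rw [show (3*m + 2 + 6*(n:ℤ) : ℤ) = 3*(m + 2*n) + 2 by ring, FF2, FF2, wv_shift, apx_shift]

lemma HH_shift (j : ℤ) : HH n (j + 6*(n:ℤ)) = HH n j := by
  obtain ⟨m, h|h|h⟩ := three_cases j <;> subst h
  · rw [show (3*m + 6*(n:ℤ) : ℤ) = 3*(m + 2*n) by ring, HH0, HH0, wv_shift]
  · rw [show (3*m + 1 + 6*(n:ℤ) : ℤ) = 3*(m + 2*n) + 1 by ring, HH1, HH1, apx_shift]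
  · rw [show (3*m + 2 + 6*(n:ℤ) : ℤ) = 3*(m + 2*n) + 2 by ring, HH2, HH2, wv_shift]

end Helpers
section CanonZig
variable {n : ℕ} [NeZero n]

lemma eC_subset_fc (s : Bool) (i : ZMod n) : eC n i ⊆ fc n s i := by
  simp [eC, fc, Finset.insert_subset_iff]

lemma eA_subset_fc (s : Bool) (i : ZMod n) : eA n s i ⊆ fc n s i := by
  simp [eA, fc, Finset.insert_subset_iff]

lemma eA_succ_subset_fc (s : Bool) (i : ZMod n) : eA n s (i+1) ⊆ fc n s i := by
  simp [eA, fc, Finset.insert_subset_iff]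

lemma disj_C_A (s : Bool) {i j : ZMod n} (h1 : i ≠ j) (h2 : i + 1 ≠ j) :
    Disjoint (eC n i) (eA n s j) := by
  rw [Finset.disjoint_left]
  intro x hx hx'
  simp only [eC, eA, Finset.mem_insert, Finset.mem_singleton] at hx hx'
  rcases hx with rfl|rfl <;> rcases hx' with h|h <;> simp_all

lemma disj_A_C (s : Bool) {i j : ZMod n} (h1 : i ≠ j) (h2 : i ≠ j + 1) :
    Disjoint (eA n s i) (eC n j) := by
  rw [Finset.disjoint_left]
  intro x hx hx'
  simp only [eC, eA, Finset.mem_insert, Finset.mem_singleton] at hx hx'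
  rcases hx with rfl|rfl <;> rcases hx' with h|h <;> simp_all

lemma disj_A_A {s s' : Bool} (hs : s ≠ s') {i j : ZMod n} (hij : i ≠ j) :
    Disjoint (eA n s i) (eA n s' j) := by
  rw [Finset.disjoint_left]
  intro x hx hx'
  simp only [eA, Finset.mem_insert, Finset.mem_singleton] at hx hx'
  rcases hx with rfl|rfl <;> rcases hx' with h|h <;> simp_all

noncomputable def ZC (n : ℕ) [NeZero n] (hn : 3 ≤ n) : (BP n).Zigzag where
  e := EE n
  f := FF n
  head := HH n
  e_mem := by
    intro i
    obtain ⟨m, h|h|h⟩ := three_cases i <;> subst h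
    · rw [EE0]; exact eC_mem hn _
    · rw [EE1]; exact eA_mem _ _
    · rw [EE2]; exact eA_mem _ _
  f_mem := by
    intro i
    obtain ⟨m, h|h|h⟩ := three_cases i <;> subst h
    · rw [FF0]; exact fc_mem _ _
    · rw [FF1]; exact fc_mem _ _
    · rw [FF2]; exact fc_mem _ _
  sub_left := by
    intro i
    obtain ⟨m, h|h|h⟩ := three_cases i <;> subst h
    · rw [EE0, FF0]; exact eC_subset_fc _ _
    · rw [EE1, FF1]; exact eA_subset_fc _ _
    · rw [EE2, FF2]; exact eA_subset_fc _ _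
  sub_right := by
    intro i
    obtain ⟨m, h|h|h⟩ := three_cases i <;> subst h
    · rw [EE1, FF0]; exact eA_succ_subset_fc _ _
    · rw [show (3*m+1+1 : ℤ) = 3*m+2 by ring, EE2, FF1]
      unfold E2
      rw [show wv n m + 2 = (wv n m + 1) + 1 by ring]
      exact eA_succ_subset_fc _ _
    · rw [show (3*m+2+1 : ℤ) = 3*(m+1) by ring, EE0, FF2]
      unfold E0; rw [wv_succ]
      exact eC_subset_fc _ _
  edges_ne := by
    intro i
    obtain ⟨m, h|h|h⟩ := three_cases i <;> subst h
    · rw [EE0, EE1]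
      exact (eA_ne_eC _ _ _).symm
    · rw [show (3*m+1+1 : ℤ) = 3*m+2 by ring, EE1, EE2]
      intro h
      have := (eA_eq_iff.mp h).2
      exact zm_one_ne hn (by linear_combination -this)
    · rw [show (3*m+2+1 : ℤ) = 3*(m+1) by ring, EE2, EE0]
      exact eA_ne_eC _ _ _
  faces_ne := by
    intro i
    obtain ⟨m, h|h|h⟩ := three_cases i <;> subst h
    · rw [FF0, FF1]
      intro h
      have := (fc_inj hn h).2
      exact zm_one_ne hn (by linear_combination -this)
    · rw [show (3*m+1+1 : ℤ) = 3*m+2 by ring, FF1, FF2]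
      intro h
      have := (fc_inj hn h).2
      exact zm_one_ne hn (by linear_combination -this)
    · rw [show (3*m+2+1 : ℤ) = 3*(m+1) by ring, FF2, FF0, wv_succ, apx_succ]
      intro h
      exact apx_ne_not m (fc_inj hn h).1
  disj := by
    intro i
    obtain ⟨m, h|h|h⟩ := three_cases i <;> subst h
    · rw [EE0, show (3*m+2 : ℤ) = 3*m+2 by ring, EE2]
      exact disj_C_A _ (fun h => zm_two_ne hn (by linear_combination -h))
        (fun h => zm_one_ne hn (by linear_combination -h))
    · rw [EE1, show (3*m+1+2 : ℤ) = 3*(m+1) by ring, EE0]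
      unfold E0 E1; rw [wv_succ]
      exact disj_A_C _ (fun h => zm_one_ne hn (by linear_combination -h))
        (fun h => zm_two_ne hn (by linear_combination -h))
    · rw [EE2, show (3*m+2+2 : ℤ) = 3*(m+1)+1 by ring, EE1]
      unfold E1 E2; rw [wv_succ, apx_succ]
      exact disj_A_A (apx_ne_not m) (zm_ne_add_one hn _)
  inter_eq := by
    intro i
    obtain ⟨m, h|h|h⟩ := three_cases i <;> subst h
    · rw [EE0, EE1, HH0]
      exact inter_CA _ _
    · rw [show (3*m+1+1 : ℤ) = 3*m+2 by ring, EE1, EE2, HH1]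
      unfold E1 E2
      rw [show wv n m + 2 = (wv n m + 1) + 1 by ring]
      exact inter_AA _ (zm_ne_add_one hn _)
    · rw [show (3*m+2+1 : ℤ) = 3*(m+1) by ring, EE2, EE0, HH2]
      unfold E2 E0
      rw [wv_succ]
      exact inter_AC _ _
  exists_period := by
    refine ⟨6*n, by have := Nat.pos_of_ne_zero (NeZero.ne n); omega, fun i => ?_⟩
    have hc : ((6*n : ℕ) : ℤ) = 6*(n:ℤ) := by push_cast; ring
    rw [hc]
    exact ⟨EE_shift i, FF_shift i, HH_shift i⟩

end CanonZig
section Rev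
variable {V : Type} [DecidableEq V] {T : Triangulation V}

noncomputable def Triangulation.Zigzag.rev (Z : T.Zigzag) : T.Zigzag where
  e i := Z.e (-i)
  f i := Z.f (-i-1)
  head i := Z.head (-i-1)
  e_mem i := Z.e_mem _
  f_mem i := Z.f_mem _
  sub_left i := by
    show Z.e (-i) ⊆ Z.f (-i-1)
    have h := Z.sub_right (-i-1)
    rwa [show (-i-1+1 : ℤ) = -i by ring] at h
  sub_right i := by
    show Z.e (-(i+1)) ⊆ Z.f (-i-1)
    rw [show (-(i+1) : ℤ) = -i-1 by ring]
    exact Z.sub_left _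
  edges_ne i := by
    show Z.e (-i) ≠ Z.e (-(i+1))
    rw [show (-(i+1) : ℤ) = -i-1 by ring]
    have h := Z.edges_ne (-i-1)
    rw [show (-i-1+1 : ℤ) = -i by ring] at h
    exact h.symm
  faces_ne i := by
    show Z.f (-i-1) ≠ Z.f (-(i+1)-1)
    rw [show (-(i+1)-1 : ℤ) = -i-2 by ring]
    have h := Z.faces_ne (-i-2)
    rw [show (-i-2+1 : ℤ) = -i-1 by ring] at h
    exact h.symm
  disj i := by
    show Disjoint (Z.e (-i)) (Z.e (-(i+2)))
    rw [show (-(i+2) : ℤ) = -i-2 by ring]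
    have h := (Z.disj (-i-2)).symm
    rwa [show (-i-2+2 : ℤ) = -i by ring] at h
  inter_eq i := by
    show Z.e (-i) ∩ Z.e (-(i+1)) = {Z.head (-i-1)}
    rw [show (-(i+1) : ℤ) = -i-1 by ring, Finset.inter_comm]
    have h := Z.inter_eq (-i-1)
    rwa [show (-i-1+1 : ℤ) = -i by ring] at h
  exists_period := by
    obtain ⟨p, hp, h⟩ := Z.exists_period
    refine ⟨p, hp, fun i => ⟨?_, ?_, ?_⟩⟩
    · show Z.e (-(i+(p:ℤ))) = Z.e (-i)
      have hx := (h (-(i+(p:ℤ)))).1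
      rw [show (-(i+(p:ℤ))+(p:ℤ) : ℤ) = -i by ring] at hx
      exact hx.symm
    · show Z.f (-(i+(p:ℤ))-1) = Z.f (-i-1)
      have hx := (h (-(i+(p:ℤ))-1)).2.1
      rw [show (-(i+(p:ℤ))-1+(p:ℤ) : ℤ) = -i-1 by ring] at hx
      exact hx.symm
    · show Z.head (-(i+(p:ℤ))-1) = Z.head (-i-1)
      have hx := (h (-(i+(p:ℤ))-1)).2.2
      rw [show (-(i+(p:ℤ))-1+(p:ℤ) : ℤ) = -i-1 by ring] at hx
      exact hx.symm

@[simp] lemma Triangulation.Zigzag.rev_e (Z : T.Zigzag) (i : ℤ) : Z.rev.e i = Z.e (-i) := rfl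

end Rev

section Determinism
variable {n : ℕ} [NeZero n]

lemma face_card (hn : 3 ≤ n) {f : Finset (Bool ⊕ ZMod n)} (hf : f ∈ (BP n).faces) :
    f.card = 3 := by
  rcases mem_faces_iff.mp hf with ⟨s, i, rfl⟩
  exact fc_card hn s i

lemma face_eq_union (hn : 3 ≤ n) (Z : (BP n).Zigzag) (i : ℤ) :
    Z.f i = Z.e i ∪ Z.e (i+1) := by
  have hsub : Z.e i ∪ Z.e (i+1) ⊆ Z.f i :=
    Finset.union_subset (Z.sub_left i) (Z.sub_right i)
  have hca : (Z.e i).card = 2 := edge_card (Z.e_mem i)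
  have hcb : (Z.e (i+1)).card = 2 := edge_card (Z.e_mem (i+1))
  have hcf : (Z.f i).card = 3 := face_card hn (Z.f_mem i)
  have hge : 3 ≤ (Z.e i ∪ Z.e (i+1)).card := by
    by_contra hlt
    push_neg at hlt
    have h1 : Z.e i = Z.e i ∪ Z.e (i+1) :=
      Finset.eq_of_subset_of_card_le Finset.subset_union_left (by omega)
    have h2 : Z.e (i+1) = Z.e i ∪ Z.e (i+1) :=
      Finset.eq_of_subset_of_card_le Finset.subset_union_right (by omega)
    exact Z.edges_ne i (h1.trans h2.symm)
  exact (Finset.eq_of_subset_of_card_le hsub (by omega)).symm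

lemma next_unique (hn : 3 ≤ n) (Z W : (BP n).Zigzag) (i j : ℤ)
    (h0 : Z.e i = W.e j) (h1 : Z.e (i+1) = W.e (j+1)) : Z.e (i+2) = W.e (j+2) := by
  have hb : Z.e (i+1) ∈ (BP n).edges := Z.e_mem (i+1)
  have hZfi : Z.f i = Z.e i ∪ Z.e (i+1) := face_eq_union hn Z i
  have hWfj : W.f j = W.e j ∪ W.e (j+1) := face_eq_union hn W j
  have hff : Z.f i = W.f j := by rw [hZfi, hWfj, h0, h1]
  have hkey : Z.f (i+1) = W.f (j+1) := by
    refine two_faces hn hb (Z.f_mem i) (Z.f_mem (i+1)) (W.f_mem (j+1))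
      (Z.sub_right i) (Z.sub_left (i+1)) ?_ (Z.faces_ne i).symm ?_
    · rw [h1]; exact W.sub_left (j+1)
    · rw [hff]; exact (W.faces_ne j).symm
  -- heads agree
  have hhead : ({Z.head i} : Finset (Bool ⊕ ZMod n)) = {W.head j} := by
    rw [← Z.inter_eq i, ← W.inter_eq j, h0, h1]
  have hZhW : Z.head i = W.head j := by
    have := Finset.mem_singleton.mp (hhead ▸ Finset.mem_singleton_self (Z.head i))
    exact this
  have hha : Z.head i ∈ Z.e i := by
    have := Finset.mem_singleton_self (Z.head i)
    rw [← Z.inter_eq i] at this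
    exact (Finset.mem_inter.mp this).1
  have hhb : Z.head i ∈ Z.e (i+1) := by
    have := Finset.mem_singleton_self (Z.head i)
    rw [← Z.inter_eq i] at this
    exact (Finset.mem_inter.mp this).2
  have hhF : Z.head i ∈ Z.f (i+1) := Z.sub_left (i+1) hhb
  have hcF : (Z.f (i+1)).card = 3 := face_card hn (Z.f_mem (i+1))
  have hcard_erase : ((Z.f (i+1)).erase (Z.head i)).card = 2 := by
    rw [Finset.card_erase_of_mem hhF, hcF]
  -- c
  have hcZ : Z.e (i+2) = (Z.f (i+1)).erase (Z.head i) := by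
    have hnotin : Z.head i ∉ Z.e (i+2) := by
      have hd := Z.disj i
      exact Finset.disjoint_left.mp hd hha
    have hsub : Z.e (i+2) ⊆ (Z.f (i+1)).erase (Z.head i) := by
      apply Finset.subset_erase.mpr
      refine ⟨?_, hnotin⟩
      have := Z.sub_right (i+1)
      rwa [show (i+1+1 : ℤ) = i+2 by ring] at this
    exact Finset.eq_of_subset_of_card_le hsub (by rw [hcard_erase, edge_card (Z.e_mem (i+2))])
  have hcW : W.e (j+2) = (W.f (j+1)).erase (W.head j) := by
    have hha' : W.head j ∈ W.e j := by
      have := Finset.mem_singleton_self (W.head j)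
      rw [← W.inter_eq j] at this
      exact (Finset.mem_inter.mp this).1
    have hnotin : W.head j ∉ W.e (j+2) := Finset.disjoint_left.mp (W.disj j) hha'
    have hsub : W.e (j+2) ⊆ (W.f (j+1)).erase (W.head j) := by
      apply Finset.subset_erase.mpr
      refine ⟨?_, hnotin⟩
      have := W.sub_right (j+1)
      rwa [show (j+1+1 : ℤ) = j+2 by ring] at this
    refine Finset.eq_of_subset_of_card_le hsub ?_
    rw [Finset.card_erase_of_mem, face_card hn (W.f_mem (j+1)), edge_card (W.e_mem (j+2))]
    · rw [← hkey, ← hZhW]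
      exact hhF
  rw [hcZ, hcW, hkey, hZhW]

lemma prev_unique (hn : 3 ≤ n) (Z W : (BP n).Zigzag) (i j : ℤ)
    (h0 : Z.e i = W.e j) (h1 : Z.e (i+1) = W.e (j+1)) : Z.e (i-1) = W.e (j-1) := by
  have key := next_unique hn Z.rev W.rev (-(i+1)) (-(j+1)) ?_ ?_
  · rw [Triangulation.Zigzag.rev_e, Triangulation.Zigzag.rev_e] at key
    rwa [show (-(-(i+1)+2) : ℤ) = i-1 by ring, show (-(-(j+1)+2) : ℤ) = j-1 by ring] at key
  · simp only [Triangulation.Zigzag.rev_e]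
    rw [show (-(-(i+1)) : ℤ) = i+1 by ring, show (-(-(j+1)) : ℤ) = j+1 by ring]
    exact h1
  · simp only [Triangulation.Zigzag.rev_e]
    rw [show (-(-(i+1)+1) : ℤ) = i by ring, show (-(-(j+1)+1) : ℤ) = j by ring]
    exact h0

lemma ext_of_two (hn : 3 ≤ n) (Z W : (BP n).Zigzag) (i j : ℤ)
    (h0 : Z.e i = W.e j) (h1 : Z.e (i+1) = W.e (j+1)) :
    ∀ t : ℤ, Z.e (i+t) = W.e (j+t) := by
  have key : ∀ t : ℤ, Z.e (i+t) = W.e (j+t) ∧ Z.e (i+t+1) = W.e (j+t+1) := by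
    intro t
    induction t using Int.induction_on with
    | zero => exact ⟨by simpa using h0, by simpa using h1⟩
    | succ k ih =>
      obtain ⟨p1, p2⟩ := ih
      have hnext := next_unique hn Z W (i+k) (j+k)
        (by rwa []) (by rwa [show (i+(k:ℤ)+1 : ℤ) = i+k+1 by ring])
      constructor
      · rwa [show (i+((k:ℤ)+1) : ℤ) = i+k+1 by ring, show (j+((k:ℤ)+1) : ℤ) = j+k+1 by ring]
      · rw [show (i+((k:ℤ)+1)+1 : ℤ) = i+k+2 by ring, show (j+((k:ℤ)+1)+1 : ℤ) = j+k+2 by ring]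
        exact hnext
    | pred k ih =>
      obtain ⟨p1, p2⟩ := ih
      have hprev := prev_unique hn Z W (i+(-k)) (j+(-k)) p1 p2
      constructor
      · rw [show (i + (-(k:ℤ) - 1) : ℤ) = i+(-(k:ℤ))-1 by ring,
          show (j + (-(k:ℤ) - 1) : ℤ) = j+(-(k:ℤ))-1 by ring]
        exact hprev
      · rw [show (i + (-(k:ℤ) - 1) + 1 : ℤ) = i+(-(k:ℤ)) by ring,
          show (j + (-(k:ℤ) - 1) + 1 : ℤ) = j+(-(k:ℤ)) by ring]
        exact p1
  exact fun t => (key t).1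

end Determinism
section Classify
variable {n : ℕ} [NeZero n]

lemma apx_flip (hodd : Odd n) (m : ℤ) : apx (m + (n:ℤ)) = !apx m := by
  obtain ⟨k, hk⟩ := hodd
  have hn' : (n:ℤ) = 2*(k:ℤ)+1 := by exact_mod_cast congrArg (Nat.cast : ℕ → ℤ) hk
  by_cases h : m % 2 = 1
  · have h2 : (m + (n:ℤ)) % 2 = 0 := by omega
    simp [apx, h, h2]
  · have h2 : (m + (n:ℤ)) % 2 = 1 := by omega
    simp [apx, h, h2]

lemma exists_m (hodd : Odd n) (i : ZMod n) (s : Bool) :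
    ∃ m : ℤ, wv n m = i ∧ apx m = s := by
  obtain ⟨k, hk⟩ := hodd
  set m₀ : ℤ := ((k:ℤ) + 1) * (i.val : ℤ) with hm₀
  have hw : wv n m₀ = i := by
    unfold wv
    have h1 : (2 : ZMod n) * ((m₀ : ℤ) : ZMod n) = ((2 * m₀ : ℤ) : ZMod n) := by push_cast; ring
    rw [h1, show (2*m₀ : ℤ) = ((n:ℤ)+1) * (i.val : ℤ) by rw [hm₀]; push_cast [hk]; ring]
    push_cast [ZMod.natCast_self, ZMod.natCast_val, ZMod.cast_id]
    ring
  have hw2 : wv n (m₀ + (n:ℤ)) = i := by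
    unfold wv at hw ⊢
    push_cast [ZMod.natCast_self] at hw ⊢
    linear_combination hw
  by_cases hs : apx m₀ = s
  · exact ⟨m₀, hw, hs⟩
  · refine ⟨m₀ + (n:ℤ), hw2, ?_⟩
    rw [apx_flip ⟨k, hk⟩ m₀]
    cases hA : apx m₀ <;> cases s <;> simp_all

lemma init_cases (hn : 3 ≤ n) (Z : (BP n).Zigzag) :
    ∃ (s : Bool) (i : ZMod n),
      (Z.e 0 = eC n i ∧ Z.e 1 = eA n s (i+1)) ∨
      (Z.e 0 = eC n i ∧ Z.e 1 = eA n s i) ∨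
      (Z.e 0 = eA n s i ∧ Z.e 1 = eA n s (i+1)) ∨
      (Z.e 0 = eA n s (i+1) ∧ Z.e 1 = eA n s i) ∨
      (Z.e 0 = eA n s i ∧ Z.e 1 = eC n i) ∨
      (Z.e 0 = eA n s (i+1) ∧ Z.e 1 = eC n i) := by
    obtain ⟨s, i, hsi⟩ := mem_faces_iff.mp (Z.f_mem 0)
    have hfu : Z.f 0 = Z.e 0 ∪ Z.e 1 := by
      have := face_eq_union hn Z 0
      rwa [show (0+1 : ℤ) = 1 by ring] at this
    have h0 : Z.e 0 ⊆ fc n s i := by rw [← hsi]; exact Z.sub_left 0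
    have h1 : Z.e 1 ⊆ fc n s i := by
      rw [← hsi]
      have := Z.sub_right 0
      rwa [show (0+1 : ℤ) = 1 by ring] at this
    have hne : Z.e 0 ≠ Z.e 1 := by
      have := Z.edges_ne 0
      rwa [show (0+1 : ℤ) = 1 by ring] at this
    have c0 := sub2_of_triple _ _ _ _ h0 (edge_card (Z.e_mem 0))
    have c1 := sub2_of_triple _ _ _ _ h1 (edge_card (Z.e_mem 1))
    have eqA : ({Sum.inl s, Sum.inr i} : Finset (Bool ⊕ ZMod n)) = eA n s i := rfl
    have eqA' : ({Sum.inl s, Sum.inr (i+1)} : Finset (Bool ⊕ ZMod n)) = eA n s (i+1) := rfl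
    have eqC : ({Sum.inr i, Sum.inr (i+1)} : Finset (Bool ⊕ ZMod n)) = eC n i := rfl
    rw [eqA, eqA', eqC] at c0 c1
    refine ⟨s, i, ?_⟩
    rcases c0 with h|h|h <;> rcases c1 with h'|h'|h' <;> rw [h, h'] <;> rw [h, h'] at hne <;>
      tauto

lemma ZC_e (hn : 3 ≤ n) (i : ℤ) : (ZC n hn).e i = EE n i := rfl
lemma ZC_rev_e (hn : 3 ≤ n) (i : ℤ) : (ZC n hn).rev.e i = EE n (-i) := rfl

lemma canonical (hodd : Odd n) (hn : 3 ≤ n) (Z : (BP n).Zigzag) :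
    ∃ c : ℤ, (∀ t : ℤ, Z.e t = EE n (t + c)) ∨ (∀ t : ℤ, Z.e t = EE n (c - t)) := by
  have fwd : ∀ c : ℤ, EE n c = Z.e 0 → EE n (c+1) = Z.e 1 →
      ∀ t : ℤ, Z.e t = EE n (t + c) := by
    intro c h0 h1 t
    have := ext_of_two hn (ZC n hn) Z c 0 (by rw [ZC_e]; simpa using h0)
      (by rw [ZC_e]; simpa using h1) t
    rw [ZC_e, zero_add] at this
    rw [show (t + c : ℤ) = c + t by ring]
    exact this.symm
  have bwd : ∀ c : ℤ, EE n c = Z.e 0 → EE n (c-1) = Z.e 1 →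
      ∀ t : ℤ, Z.e t = EE n (c - t) := by
    intro c h0 h1 t
    have := ext_of_two hn (ZC n hn).rev Z (-c) 0
      (by rw [ZC_rev_e, neg_neg]; simpa using h0)
      (by rw [ZC_rev_e, show (-(-c+1) : ℤ) = c - 1 by ring]; simpa using h1) t
    rw [ZC_rev_e, zero_add] at this
    rw [show (c - t : ℤ) = -(-c + t) by ring]
    exact this.symm
  obtain ⟨s, i, hc⟩ := init_cases hn Z
  rcases hc with ⟨h0, h1⟩|⟨h0, h1⟩|⟨h0, h1⟩|⟨h0, h1⟩|⟨h0, h1⟩|⟨h0, h1⟩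
  · -- (eC i, eA s (i+1)) : forward, c = 3m
    obtain ⟨m, hw, ha⟩ := exists_m hodd i s
    refine ⟨3*m, Or.inl (fwd _ ?_ ?_)⟩
    · rw [EE0, h0]; unfold E0; rw [hw]
    · rw [EE1, h1]; unfold E1; rw [hw, ha]
  · -- (eC i, eA s i) : backward, c = 3m with apx m = !s
    obtain ⟨m, hw, ha⟩ := exists_m hodd i (!s)
    refine ⟨3*m, Or.inr (bwd _ ?_ ?_)⟩
    · rw [EE0, h0]; unfold E0; rw [hw]
    · rw [show (3*m-1 : ℤ) = 3*(m-1)+2 by ring, EE2, h1]; unfold E2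
      rw [apx_pred, ha, Bool.not_not]
      congr 1
      have := wv_succ (n := n) (m-1)
      rw [sub_add_cancel] at this
      rw [← this, hw]
  · -- (eA s i, eA s (i+1)) : forward, c = 3m+1, wv m = i - 1
    obtain ⟨m, hw, ha⟩ := exists_m hodd (i-1) s
    refine ⟨3*m+1, Or.inl (fwd _ ?_ ?_)⟩
    · rw [EE1, h0]; unfold E1; rw [hw, ha]; congr 1; ring
    · rw [show (3*m+1+1 : ℤ) = 3*m+2 by ring, EE2, h1]; unfold E2
      rw [hw, ha]; congr 1; ring
  · -- (eA s (i+1), eA s i) : backward, c = 3m+2, wv m = i - 1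
    obtain ⟨m, hw, ha⟩ := exists_m hodd (i-1) s
    refine ⟨3*m+2, Or.inr (bwd _ ?_ ?_)⟩
    · rw [EE2, h0]; unfold E2; rw [hw, ha]; congr 1; ring
    · rw [show (3*m+2-1 : ℤ) = 3*m+1 by ring, EE1, h1]; unfold E1
      rw [hw, ha]; congr 1; ring
  · -- (eA s i, eC i) : forward, c = 3m+2, wv m = i - 2
    obtain ⟨m, hw, ha⟩ := exists_m hodd (i-2) s
    refine ⟨3*m+2, Or.inl (fwd _ ?_ ?_)⟩
    · rw [EE2, h0]; unfold E2; rw [hw, ha]; congr 1; ring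
    · rw [show (3*m+2+1 : ℤ) = 3*(m+1) by ring, EE0, h1]; unfold E0
      rw [wv_succ, hw]; congr 1; ring
  · -- (eA s (i+1), eC i) : backward, c = 3m+1, wv m = i
    obtain ⟨m, hw, ha⟩ := exists_m hodd i s
    refine ⟨3*m+1, Or.inr (bwd _ ?_ ?_)⟩
    · rw [EE1, h0]; unfold E1; rw [hw, ha]
    · rw [show (3*m+1-1 : ℤ) = 3*m by ring, EE0, h1]; unfold E0; rw [hw]

end Classify
section Periods
variable {n : ℕ} [NeZero n]

lemma period_mul {α : Type*} (f : ℤ → α) (p : ℤ) (h : ∀ j, f (j + p) = f j) :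
    ∀ j t, f (j + p*t) = f j := by
  intro j t
  induction t using Int.induction_on with
  | zero => simp
  | succ k ih => rw [show (j + p*((k:ℤ)+1) : ℤ) = (j + p*(k:ℤ)) + p by ring, h, ih]
  | pred k ih =>
    have h2 := h (j + p*(-(k:ℤ)) - p)
    rw [show (j + p*(-(k:ℤ)) - p + p : ℤ) = j + p*(-(k:ℤ)) by ring] at h2
    rw [show (j + p*(-(k:ℤ)-1) : ℤ) = j + p*(-(k:ℤ)) - p by ring, ← h2]
    exact ih

lemma EE_congr {j j' : ℤ} (h : (6*(n:ℤ)) ∣ (j - j')) : EE n j = EE n j' := by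
  obtain ⟨t, ht⟩ := h
  have := period_mul (EE n) (6*(n:ℤ)) (fun j => EE_shift j) j' t
  rw [show (j' + 6*(n:ℤ)*t : ℤ) = j by linarith] at this
  exact this

lemma dvd_of_m {m m' : ℤ} (hodd : Odd n) (hw : wv n m = wv n m') (hp : apx m = apx m') :
    (2*(n:ℤ)) ∣ (m - m') := by
  have h1 : (n:ℤ) ∣ (m - m') := by
    have := wv_inj hodd hw.symm
    exact this
  have h2 : (2:ℤ) ∣ (m - m') := by
    rw [apx_eq_iff] at hp
    omega
  exact dvd_two_mul_of hodd h2 h1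

lemma EE_period_iff (hodd : Odd n) (hn : 3 ≤ n) (k : ℤ) :
    (∀ j, EE n (j + k) = EE n j) ↔ (6*(n:ℤ)) ∣ k := by
  constructor
  · intro h
    obtain ⟨m, hm|hm|hm⟩ := three_cases k
    · -- k = 3m
      have e0 : EE n (3*m) = EE n (3*0) := by
        rw [show (3*m : ℤ) = 0 + k by rw [hm]; ring, show (3*0 : ℤ) = 0 by ring]
        exact h 0
      rw [EE0, EE0] at e0
      have hw : wv n m = wv n 0 := by
        have := eC_eq_iff (n := n) hn (i := wv n m) (j := wv n 0)
        exact this.mp e0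
      have e1 : EE n (3*m+1) = EE n (3*0+1) := by
        rw [show (3*m+1 : ℤ) = 1 + k by rw [hm]; ring, show (3*0+1 : ℤ) = 1 by ring]
        exact h 1
      rw [EE1, EE1] at e1
      have hp : apx m = apx 0 := by
        have := eA_eq_iff.mp (e1 : E1 n m = E1 n 0)
        exact this.1
      have hd := dvd_of_m hodd hw hp
      rw [hm]
      obtain ⟨t, ht⟩ := hd
      exact ⟨t, by linear_combination 3*ht⟩
    · exfalso
      have h0 := h 0
      rw [zero_add, hm, EE1, show (0:ℤ) = 3*0 by ring, EE0] at h0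
      exact eA_ne_eC _ _ _ h0
    · exfalso
      have h0 := h 0
      rw [zero_add, hm, EE2, show (0:ℤ) = 3*0 by ring, EE0] at h0
      exact eA_ne_eC _ _ _ h0
  · intro hdvd j
    exact EE_congr (by simpa using hdvd)

lemma length_eq (hodd : Odd n) (hn : 3 ≤ n) (Z : (BP n).Zigzag) : Z.length = 6*n := by
  have hiff : ∀ k : ℕ, (0 < k ∧ ∀ i : ℤ, Z.e (i + k) = Z.e i) ↔ (0 < k ∧ (6*n) ∣ k) := by
    intro k
    rcases canonical hodd hn Z with ⟨c, hc|hc⟩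
    · constructor
      · rintro ⟨hk, h⟩
        refine ⟨hk, ?_⟩
        have : (6*(n:ℤ)) ∣ (k:ℤ) := by
          rw [← EE_period_iff hodd hn]
          intro j
          have := h (j - c)
          rw [hc, hc] at this
          rwa [show (j - c + (k:ℤ) + c : ℤ) = j + k by ring, show (j - c + c : ℤ) = j by ring] at this
        exact_mod_cast this
      · rintro ⟨hk, h⟩
        refine ⟨hk, fun i => ?_⟩
        rw [hc, hc]
        apply EE_congr
        rw [show (i + (k:ℤ) + c - (i + c) : ℤ) = (k:ℤ) by ring]
        exact_mod_cast h
    · constructor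
      · rintro ⟨hk, h⟩
        refine ⟨hk, ?_⟩
        have : (6*(n:ℤ)) ∣ (k:ℤ) := by
          rw [← EE_period_iff hodd hn]
          intro j
          have := h (c - j - k)
          rw [hc, hc] at this
          rw [show (c - (c - j - (k:ℤ) + (k:ℤ)) : ℤ) = j by ring,
            show (c - (c - j - (k:ℤ)) : ℤ) = j + (k:ℤ) by ring] at this
          exact this.symm
        exact_mod_cast this
      · rintro ⟨hk, h⟩
        refine ⟨hk, fun i => ?_⟩
        rw [hc, hc]
        apply EE_congr
        rw [show (c - (i + (k:ℤ)) - (c - i) : ℤ) = -(k:ℤ) by ring]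
        exact dvd_neg.mpr (by exact_mod_cast h)
  unfold Triangulation.Zigzag.length
  have hset : {k : ℕ | 0 < k ∧ ∀ i : ℤ, Z.e (i + k) = Z.e i} = {k : ℕ | 0 < k ∧ (6*n) ∣ k} := by
    ext k; exact hiff k
  rw [hset]
  have hpos : 0 < 6*n := by have := Nat.pos_of_ne_zero (NeZero.ne n); omega
  apply le_antisymm
  · exact Nat.sInf_le ⟨hpos, dvd_rfl⟩
  · exact le_csInf ⟨6*n, hpos, dvd_rfl⟩ (fun b hb => Nat.le_of_dvd hb.1 hb.2)

end Periods
section Counting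
variable {n : ℕ} [NeZero n]

lemma three_dvd_six_n : (3:ℤ) ∣ 6*(n:ℤ) := ⟨2*(n:ℤ), by ring⟩

lemma occ_eC (hodd : Odd n) (hn : 3 ≤ n) (i : ZMod n) :
    ∃ j₁ j₂ : ℤ, ¬ (6*(n:ℤ)) ∣ (j₁ - j₂) ∧
      ∀ j : ℤ, EE n j = eC n i ↔ (6*(n:ℤ)) ∣ (j - j₁) ∨ (6*(n:ℤ)) ∣ (j - j₂) := by
  obtain ⟨m₁, hw₁, ha₁⟩ := exists_m hodd i false
  obtain ⟨m₂, hw₂, ha₂⟩ := exists_m hodd i true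
  refine ⟨3*m₁, 3*m₂, ?_, fun j => ⟨?_, ?_⟩⟩
  · intro hdvd
    have h3 : (3*(2*(n:ℤ))) ∣ 3*(m₁ - m₂) := by
      rw [show (3*(2*(n:ℤ)) : ℤ) = 6*(n:ℤ) by ring, show (3*(m₁ - m₂) : ℤ) = 3*m₁ - 3*m₂ by ring]
      exact hdvd
    have h2n : (2*(n:ℤ)) ∣ (m₁ - m₂) := (mul_dvd_mul_iff_left (by norm_num : (3:ℤ) ≠ 0)).mp h3
    have h2 : (2:ℤ) ∣ (m₁ - m₂) := dvd_trans ⟨(n:ℤ), rfl⟩ h2n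
    have : m₁ % 2 = m₂ % 2 := by omega
    rw [← apx_eq_iff, ha₁, ha₂] at this
    simp at this
  · intro hj
    obtain ⟨m, hm|hm|hm⟩ := three_cases j
    · rw [hm, EE0] at hj
      have hw : wv n m = i := eC_eq_iff hn |>.mp hj
      have hnn : (n:ℤ) ∣ (m - m₁) := wv_inj hodd (hw₁.trans hw.symm)
      have hnn2 : (n:ℤ) ∣ (m - m₂) := wv_inj hodd (hw₂.trans hw.symm)
      by_cases hpar : m % 2 = m₁ % 2
      · left
        have h2 : (2:ℤ) ∣ (m - m₁) := by omega
        obtain ⟨t, ht⟩ := dvd_two_mul_of hodd h2 hnn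
        exact ⟨t, by rw [hm]; linear_combination 3*ht⟩
      · right
        have hp12 : m₁ % 2 ≠ m₂ % 2 := by
          intro hc
          rw [← apx_eq_iff, ha₁, ha₂] at hc
          simp at hc
        have h2 : (2:ℤ) ∣ (m - m₂) := by omega
        obtain ⟨t, ht⟩ := dvd_two_mul_of hodd h2 hnn2
        exact ⟨t, by rw [hm]; linear_combination 3*ht⟩
    · exfalso
      rw [hm, EE1] at hj
      exact eA_ne_eC _ _ _ hj
    · exfalso
      rw [hm, EE2] at hj
      exact eA_ne_eC _ _ _ hj
  · intro hj
    have h1 : EE n (3*m₁) = eC n i := by rw [EE0]; unfold E0; rw [hw₁]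
    have h2 : EE n (3*m₂) = eC n i := by rw [EE0]; unfold E0; rw [hw₂]
    rcases hj with hd|hd
    · rw [EE_congr hd]; exact h1
    · rw [EE_congr hd]; exact h2

lemma occ_eA (hodd : Odd n) (hn : 3 ≤ n) (s : Bool) (i : ZMod n) :
    ∃ j₁ j₂ : ℤ, ¬ (6*(n:ℤ)) ∣ (j₁ - j₂) ∧
      ∀ j : ℤ, EE n j = eA n s i ↔ (6*(n:ℤ)) ∣ (j - j₁) ∨ (6*(n:ℤ)) ∣ (j - j₂) := by
  obtain ⟨m₁, hw₁, ha₁⟩ := exists_m hodd (i-1) s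
  obtain ⟨m₂, hw₂, ha₂⟩ := exists_m hodd (i-2) s
  refine ⟨3*m₁+1, 3*m₂+2, ?_, fun j => ⟨?_, ?_⟩⟩
  · intro hdvd
    have h3 : (3:ℤ) ∣ (3*m₁+1 - (3*m₂+2)) := dvd_trans three_dvd_six_n hdvd
    omega
  · intro hj
    obtain ⟨m, hm|hm|hm⟩ := three_cases j
    · exfalso
      rw [hm, EE0] at hj
      exact eA_ne_eC _ _ _ hj.symm
    · left
      rw [hm, EE1] at hj
      have := eA_eq_iff.mp (hj : eA n (apx m) (wv n m + 1) = eA n s i)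
      have hw : wv n m = wv n m₁ := by
        rw [hw₁]
        linear_combination this.2
      have hp : apx m = apx m₁ := by rw [this.1, ha₁]
      obtain ⟨t, ht⟩ := dvd_of_m hodd hw hp
      exact ⟨t, by rw [hm]; linear_combination 3*ht⟩
    · right
      rw [hm, EE2] at hj
      have := eA_eq_iff.mp (hj : eA n (apx m) (wv n m + 2) = eA n s i)
      have hw : wv n m = wv n m₂ := by
        rw [hw₂]
        linear_combination this.2
      have hp : apx m = apx m₂ := by rw [this.1, ha₂]
      obtain ⟨t, ht⟩ := dvd_of_m hodd hw hp
      exact ⟨t, by rw [hm]; linear_combination 3*ht⟩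
  · intro hj
    have h1 : EE n (3*m₁+1) = eA n s i := by
      rw [EE1]; unfold E1; rw [hw₁, ha₁]; congr 1; ring
    have h2 : EE n (3*m₂+2) = eA n s i := by
      rw [EE2]; unfold E2; rw [hw₂, ha₂]; congr 1; ring
    rcases hj with hd|hd
    · rw [EE_congr hd]; exact h1
    · rw [EE_congr hd]; exact h2

lemma count_one (hn : 3 ≤ n) (ε c t : ℤ) (hε : ε = 1 ∨ ε = -1) :
    ((Finset.range (6*n)).filter fun i : ℕ => (6*(n:ℤ)) ∣ (ε*(i:ℤ) + c - t)).card = 1 := by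
  set N : ℤ := 6*(n:ℤ) with hN
  have hNpos : 0 < N := by
    have := Nat.pos_of_ne_zero (NeZero.ne n)
    rw [hN]; positivity
  set r : ℤ := (ε*(t - c)) % N with hr
  have hr0 : 0 ≤ r := Int.emod_nonneg _ (ne_of_gt hNpos)
  have hrN : r < N := Int.emod_lt_of_pos _ hNpos
  have hrdvd : N ∣ (r - ε*(t-c)) := by
    have h := Int.mul_ediv_add_emod (ε*(t-c)) N
    rw [← hr] at h
    exact ⟨-((ε*(t-c)) / N), by linarith⟩
  have hset : ((Finset.range (6*n)).filter fun i : ℕ => N ∣ (ε*(i:ℤ) + c - t)) = {r.toNat} := by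
    ext i
    simp only [Finset.mem_filter, Finset.mem_range, Finset.mem_singleton]
    constructor
    · rintro ⟨hiN, hdvd⟩
      have hd2 : N ∣ ((i:ℤ) - ε*(t - c)) := by
        have hrew : (i:ℤ) - ε*(t-c) = ε*(ε*(i:ℤ) + c - t) := by rcases hε with rfl|rfl <;> ring
        rw [hrew]
        exact Dvd.dvd.mul_left hdvd ε
      have hd3 : N ∣ ((i:ℤ) - r) := by
        have hs := dvd_sub hd2 hrdvd
        rwa [show ((i:ℤ) - ε*(t-c) - (r - ε*(t-c))) = (i:ℤ) - r by ring] at hs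
      have hiZ : (i:ℤ) < N := by
        rw [hN]
        exact_mod_cast (by exact_mod_cast hiN : (i:ℤ) < ((6*n : ℕ) : ℤ))
      have habs : |(i:ℤ) - r| < N := abs_lt.mpr ⟨by omega, by omega⟩
      have hz := Int.eq_zero_of_abs_lt_dvd hd3 habs
      omega
    · rintro rfl
      have hiZ : ((r.toNat : ℕ) : ℤ) = r := Int.toNat_of_nonneg hr0
      refine ⟨?_, ?_⟩
      · have : r < ((6*n : ℕ) : ℤ) := by rw [← hN] at *; push_cast; omega
        omega
      · have hrew : ε*((r.toNat : ℤ)) + c - t = ε*(r - ε*(t-c)) := by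
          rw [hiZ]; rcases hε with rfl|rfl <;> ring
        rw [hrew]
        exact Dvd.dvd.mul_left hrdvd ε
  rw [hset, Finset.card_singleton]

lemma count_two (hn : 3 ≤ n) (ε c : ℤ) (hε : ε = 1 ∨ ε = -1) (j₁ j₂ : ℤ)
    (hne : ¬ (6*(n:ℤ)) ∣ (j₁ - j₂)) (a : Finset (Bool ⊕ ZMod n))
    (hocc : ∀ j : ℤ, EE n j = a ↔ (6*(n:ℤ)) ∣ (j - j₁) ∨ (6*(n:ℤ)) ∣ (j - j₂)) :
    ((Finset.range (6*n)).filter fun i : ℕ => EE n (ε*(i:ℤ) + c) = a).card = 2 := by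
  have hcong : ((Finset.range (6*n)).filter fun i : ℕ => EE n (ε*(i:ℤ) + c) = a) =
      ((Finset.range (6*n)).filter fun i : ℕ =>
        ((6*(n:ℤ)) ∣ (ε*(i:ℤ) + c - j₁) ∨ (6*(n:ℤ)) ∣ (ε*(i:ℤ) + c - j₂))) := by
    apply Finset.filter_congr
    intro i _
    simpa using hocc (ε*(i:ℤ) + c)
  rw [hcong, Finset.filter_or]
  rw [Finset.card_union_of_disjoint]
  · rw [count_one hn ε c j₁ hε, count_one hn ε c j₂ hε]
  · rw [Finset.disjoint_left]
    intro x hx1 hx2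
    simp only [Finset.mem_filter] at hx1 hx2
    apply hne
    have h := dvd_sub hx2.2 hx1.2
    rwa [show (ε*(x:ℤ) + c - j₂ - (ε*(x:ℤ) + c - j₁)) = j₁ - j₂ by ring] at h

end Counting
section Final
variable {n : ℕ} [NeZero n]

lemma mult_eq (hodd : Odd n) (hn : 3 ≤ n) (Z : (BP n).Zigzag)
    (a : Finset (Bool ⊕ ZMod n)) (ha : a ∈ (BP n).edges) : Z.mult a = 2 := by
  unfold Triangulation.Zigzag.mult
  rw [length_eq hodd hn Z]
  have hco : (do let i ← Finset.range (6*n); pure ((i : ℕ) : ℤ) : Finset ℤ)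
      = (Finset.range (6*n)).image (fun i : ℕ => (i:ℤ)) := by
    ext x; simp [Finset.bind_def, Finset.mem_sup]
  rw [hco, Finset.filter_image,
    Finset.card_image_of_injective _ (fun x y h => by exact_mod_cast h)]
  obtain ⟨j₁, j₂, hne, hocc⟩ :
      ∃ j₁ j₂ : ℤ, ¬ (6*(n:ℤ)) ∣ (j₁ - j₂) ∧
        ∀ j : ℤ, EE n j = a ↔ (6*(n:ℤ)) ∣ (j - j₁) ∨ (6*(n:ℤ)) ∣ (j - j₂) := by
    rcases edge_cases ha with ⟨s, i, rfl⟩ | ⟨i, rfl⟩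
    · exact occ_eA hodd hn s i
    · exact occ_eC hodd hn i
  rcases canonical hodd hn Z with ⟨c, hc|hc⟩
  · have hfilter : ((Finset.range (6*n)).filter fun i : ℕ => Z.e (i:ℤ) = a) =
        ((Finset.range (6*n)).filter fun i : ℕ => EE n (1*(i:ℤ) + c) = a) := by
      apply Finset.filter_congr
      intro i _
      rw [hc, one_mul]
    rw [hfilter]
    exact count_two hn 1 c (Or.inl rfl) j₁ j₂ hne a hocc
  · have hfilter : ((Finset.range (6*n)).filter fun i : ℕ => Z.e (i:ℤ) = a) =
        ((Finset.range (6*n)).filter fun i : ℕ => EE n ((-1)*(i:ℤ) + c) = a) := by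
      apply Finset.filter_congr
      intro i _
      rw [hc, show (c - (i:ℤ) : ℤ) = (-1)*(i:ℤ) + c by ring]
    rw [hfilter]
    exact count_two hn (-1) c (Or.inr rfl) j₁ j₂ hne a hocc

end Final


/-- For the `n`-gonal bipyramid `BP n` with `n` odd, there is
exactly one zigzag up to reversal; that is, `BP n` is z-knotted, and the
unique zigzag has length `6n` (it traverses every edge exactly twice). -/
theorem stmt3 (n : ℕ) [NeZero n] (hodd : Odd n) (hn : 3 ≤ n) :
    (BP n).IsZKnotted ∧
    ∀ Z : (BP n).Zigzag, Z.length = 6 * n ∧ ∀ a ∈ (BP n).edges, Z.mult a = 2 := by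
  constructor
  · refine ⟨⟨ZC n hn⟩, fun Z W => ?_⟩
    rcases canonical hodd hn Z with ⟨c, hZ|hZ⟩ <;> rcases canonical hodd hn W with ⟨d, hW|hW⟩
    · exact Or.inl ⟨d - c, fun i => by rw [hW i, hZ (i + (d - c))]; congr 1; ring⟩
    · exact Or.inr ⟨d - c, fun i => by rw [hW i, hZ ((d - c) - i)]; congr 1; ring⟩
    · exact Or.inr ⟨c - d, fun i => by rw [hW i, hZ ((c - d) - i)]; congr 1; ring⟩
    · exact Or.inl ⟨c - d, fun i => by rw [hW i, hZ (i + (c - d))]; congr 1; ring⟩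
  · intro Z
    exact ⟨length_eq hodd hn Z, fun a ha => mult_eq hodd hn Z a ha⟩
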